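/- Let p be a prime number, A a commutative ring, ψ a Frobenius lift on A at p, and I an ideal of A with ψ(I) ⊆ I^p and such that for every k and every f ∈ A, p·f ∈ I^k implies f ∈ I^k. Let Φ : A[X] → A[X] be the ring homomorphism determined by Φ(X) = X^p and Φ(C a) = C(ψ a) for a ∈ A (so Φ(Σ a_i X^i) = Σ ψ(a_i) X^{p·i}, i.e. Φ is eval₂ along C ∘ ψ at X^p). Then Φ maps the Rees algebra A[It] = { f ∈ A[X] : coeff_i(f) ∈ I^i for all i } into itself, and for every f in the Rees algebra there exists t in the Rees algebra with Φ(f) = f^p + p·t; in particular the Rees algebra carries an induced Frobenius lift at p. -/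

import Mathlib

open Polynomial

/-- With `ψ` a Frobenius lift at the prime `p` on `A`, `I` an ideal with
`ψ(I) ⊆ I ^ p` and `p * f ∈ I ^ k → f ∈ I ^ k`, the ring endomorphism `Φ` of `A[X]` given by
`X ↦ X ^ p` and `C a ↦ C (ψ a)` (i.e. `eval₂` along `C ∘ ψ` at `X ^ p`) maps the Rees algebra
`A[It]` into itself, and for every `f` in the Rees algebra there is `t` in the Rees algebra with
`Φ f = f ^ p + p * t`; in particular the Rees algebra carries an induced Frobenius lift at `p`. -/
theorem rees_algebra_frobenius_lift
    {A : Type*} [CommRing A] (p : ℕ) (hp : p.Prime) (ψ : A →+* A)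
    (hF : ∀ a : A, ∃ b : A, ψ a = a ^ p + p * b)
    (I : Ideal A) (hψI : ∀ a ∈ I, ψ a ∈ I ^ p)
    (hflat : ∀ (k : ℕ) (f : A), (p : A) * f ∈ I ^ k → f ∈ I ^ k) :
    (∀ f ∈ reesAlgebra I,
        Polynomial.eval₂RingHom (Polynomial.C.comp ψ) (Polynomial.X ^ p) f ∈ reesAlgebra I) ∧
      (∀ f ∈ reesAlgebra I, ∃ t ∈ reesAlgebra I,
        Polynomial.eval₂RingHom (Polynomial.C.comp ψ) (Polynomial.X ^ p) f =
          f ^ p + (p : A[X]) * t) := by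
  have hp0 : 0 < p := hp.pos
  -- Φ f = expand (map ψ f)
  have hΦ : ∀ f : A[X], eval₂RingHom (C.comp ψ) (X ^ p) f = expand A p (f.map ψ) := by
    intro f
    rw [coe_eval₂RingHom, coe_expand, eval₂_map]
  -- ψ maps I^k into I^(p*k)
  have hψpow : ∀ (k : ℕ) (a : A), a ∈ I ^ k → ψ a ∈ I ^ (p * k) := by
    intro k a ha
    have h1 : Ideal.map ψ I ≤ I ^ p := by
      rw [Ideal.map_le_iff_le_comap]; exact hψI
    have h2 : ψ a ∈ Ideal.map ψ (I ^ k) := Ideal.mem_map_of_mem ψ ha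
    rw [Ideal.map_pow] at h2
    have := Ideal.pow_right_mono h1 _ h2
    rwa [← pow_mul] at this
  -- membership part
  have mem : ∀ f ∈ reesAlgebra I,
      eval₂RingHom (C.comp ψ) (X ^ p) f ∈ reesAlgebra I := by
    intro f hf
    rw [hΦ, mem_reesAlgebra_iff]
    intro i
    rw [coeff_expand hp0, coeff_map]
    split_ifs with h
    · obtain ⟨c, rfl⟩ := h
      rw [Nat.mul_div_cancel_left c hp0]
      exact hψpow c _ ((mem_reesAlgebra_iff I f).mp hf c)
    · exact Ideal.zero_mem _
  refine ⟨mem, ?_⟩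
  -- key divisibility
  have key : ∀ f : A[X], ∃ g : A[X],
      eval₂RingHom (C.comp ψ) (X ^ p) f = f ^ p + (p : A[X]) * g := by
    have mul : ∀ f g : A[X],
        (∃ s, eval₂RingHom (C.comp ψ) (X ^ p) f = f ^ p + (p : A[X]) * s) →
        (∃ s, eval₂RingHom (C.comp ψ) (X ^ p) g = g ^ p + (p : A[X]) * s) →
        ∃ s, eval₂RingHom (C.comp ψ) (X ^ p) (f * g) = (f * g) ^ p + (p : A[X]) * s := by
      rintro f g ⟨s, hs⟩ ⟨t, ht⟩
      refine ⟨s * g ^ p + f ^ p * t + (p : A[X]) * (s * t), ?_⟩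
      rw [map_mul, hs, ht]; ring
    intro f
    induction f using Polynomial.induction_on with
    | C a =>
        obtain ⟨b, hb⟩ := hF a
        exact ⟨C b, by simp [hb]⟩
    | add f g hf hg =>
        obtain ⟨s, hs⟩ := hf
        obtain ⟨t, ht⟩ := hg
        obtain ⟨r, hr⟩ := exists_add_pow_prime_eq hp f g
        exact ⟨s + t - f * g * r, by rw [map_add, hs, ht, hr]; ring⟩
    | monomial n a ih =>
        have hX : ∃ s, eval₂RingHom (C.comp ψ) (X ^ p) (X : A[X])
            = X ^ p + (p : A[X]) * s := ⟨0, by simp⟩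
        have := mul _ _ ih hX
        simpa [mul_assoc, pow_succ] using this
  intro f hf
  obtain ⟨g, hg⟩ := key f
  refine ⟨g, ?_, hg⟩
  rw [mem_reesAlgebra_iff]
  intro k
  apply hflat
  have h2 : (p : A[X]) * g = eval₂RingHom (C.comp ψ) (X ^ p) f - f ^ p := by
    rw [hg]; ring
  have h3 : (p : A) * g.coeff k = ((p : A[X]) * g).coeff k := by
    simp [Polynomial.coeff_natCast_mul]
  rw [h3, h2, Polynomial.coeff_sub]
  exact Ideal.sub_mem _ ((mem_reesAlgebra_iff I _).mp (mem f hf) k)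
    ((mem_reesAlgebra_iff I _).mp (pow_mem hf p) k)
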